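/- arXiv:2401.06353 — 2 statements merged into one kernel-verified Lean document; each statement's English description precedes it below -/
import Mathlib

section
/- Let M be a reduced atomic additive submonoid of ℤ^d whose conic hull in ℚ^d is simplicial, i.e., the conic hull of a linearly independent set of vectors. Then the number of strong atoms of M is at most the rank of M (the dimension of ℚ ⊗ gp(M)). -/
/-- An element `x` is a unit in the additive submonoid `M` if both `x` and `-x` lie in `M`. -/
def AddIsUnitIn {G : Type*} [AddCommGroup G] (M : AddSubmonoid G) (x : G) : Prop :=
  x ∈ M ∧ -x ∈ M

/-- `a` is an atom of `M`: a non-unit element of `M` that is not a sum of two non-units of `M`. -/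
def AddIsAtomIn {G : Type*} [AddCommGroup G] (M : AddSubmonoid G) (a : G) : Prop :=
  a ∈ M ∧ ¬ AddIsUnitIn M a ∧
    ∀ b c : G, b ∈ M → c ∈ M → a = b + c → AddIsUnitIn M b ∨ AddIsUnitIn M c

/-- `M` is atomic: every non-unit element of `M` is a finite sum of atoms of `M`. -/
def AddIsAtomicIn {G : Type*} [AddCommGroup G] (M : AddSubmonoid G) : Prop :=
  ∀ x ∈ M, ¬ AddIsUnitIn M x →
    ∃ s : Multiset G, (∀ a ∈ s, AddIsAtomIn M a) ∧ s.sum = x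

/-- `a` is a strong atom of `M`: an atom all of whose multiples `n • a` factor uniquely
into atoms of `M` (namely as `n` copies of `a`). -/
def AddIsStrongAtomIn {G : Type*} [AddCommGroup G] (M : AddSubmonoid G) (a : G) : Prop :=
  AddIsAtomIn M a ∧ ∀ n : ℕ, 0 < n → ∀ s : Multiset G,
    (∀ b ∈ s, AddIsAtomIn M b) → s.sum = n • a → s = Multiset.replicate n a

/-- `p` is a prime element of `M`: a non-unit of `M` such that whenever `p` divides
`b + c` in `M`, it divides `b` or `c` in `M`. -/
def AddIsPrimeIn {G : Type*} [AddCommGroup G] (M : AddSubmonoid G) (p : G) : Prop :=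
  p ∈ M ∧ ¬ AddIsUnitIn M p ∧
    ∀ b c : G, b ∈ M → c ∈ M → (∃ d ∈ M, b + c = p + d) →
      (∃ d ∈ M, b = p + d) ∨ (∃ d ∈ M, c = p + d)

/-- Componentwise coercion of an integer vector to a rational vector. -/
def coeZQ {d : ℕ} (v : Fin d → ℤ) : Fin d → ℚ := fun i => (v i : ℚ)

/-- The conic hull of a set `S ⊆ ℚ^d`: all finite nonnegative rational combinations
of elements of `S`. -/
def conicHullQ {d : ℕ} (S : Set (Fin d → ℚ)) : Set (Fin d → ℚ) :=
  {y | ∃ (n : ℕ) (c : Fin n → ℚ) (v : Fin n → Fin d → ℚ),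
    (∀ i, 0 ≤ c i ∧ v i ∈ S) ∧ y = ∑ i, c i • v i}

/-- A (convex) cone in `ℚ^d`: a nonempty set closed under nonnegative combinations. -/
def IsConvexConeQ {d : ℕ} (C : Set (Fin d → ℚ)) : Prop :=
  C.Nonempty ∧ ∀ x ∈ C, ∀ y ∈ C, ∀ a b : ℚ, 0 ≤ a → 0 ≤ b → a • x + b • y ∈ C

/-- `F` is a face of the cone `C`: a subcone such that whenever an open segment between
two points of `C` meets `F`, both endpoints lie in `F`. -/
def IsFaceOfQ {d : ℕ} (C F : Set (Fin d → ℚ)) : Prop :=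
  F ⊆ C ∧ IsConvexConeQ F ∧
    ∀ x ∈ C, ∀ y ∈ C, (∃ t : ℚ, 0 < t ∧ t < 1 ∧ t • x + (1 - t) • y ∈ F) → x ∈ F ∧ y ∈ F

def coeHomZQ {d : ℕ} : (Fin d → ℤ) →+ (Fin d → ℚ) where
  toFun := coeZQ
  map_zero' := by funext i; simp [coeZQ]
  map_add' a b := by funext i; simp [coeZQ]

lemma coeZQ_inj {d : ℕ} : Function.Injective (coeZQ (d := d)) := by
  intro a b h
  funext i
  have := congrFun h i
  simpa [coeZQ] using this

lemma coeZQ_add {d : ℕ} (a b : Fin d → ℤ) : coeZQ (a + b) = coeZQ a + coeZQ b :=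
  map_add coeHomZQ a b

lemma coeZQ_nsmul {d : ℕ} (n : ℕ) (a : Fin d → ℤ) : coeZQ (n • a) = (n : ℚ) • coeZQ a := by
  funext i; simp [coeZQ]

lemma coeZQ_sum {d : ℕ} {ι : Type*} (s : Finset ι) (f : ι → Fin d → ℤ) :
    coeZQ (∑ i ∈ s, f i) = ∑ i ∈ s, coeZQ (f i) := map_sum coeHomZQ f s

lemma subset_conicHullQ {d : ℕ} (S : Set (Fin d → ℚ)) : S ⊆ conicHullQ S := by
  intro x hx
  exact ⟨1, fun _ => 1, fun _ => x, fun i => ⟨zero_le_one, hx⟩, by simp⟩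

lemma conicHullQ_subset_span {d : ℕ} (S : Set (Fin d → ℚ)) :
    conicHullQ S ⊆ (Submodule.span ℚ S : Set (Fin d → ℚ)) := by
  rintro x ⟨n, c, v, h1, rfl⟩
  exact Submodule.sum_mem _ fun i _ =>
    Submodule.smul_mem _ _ (Submodule.subset_span (h1 i).2)

lemma mem_conicHull_range_iff {d k : ℕ} (v : Fin k → Fin d → ℚ) (x : Fin d → ℚ) :
    x ∈ conicHullQ (Set.range v) ↔
      ∃ c : Fin k → ℚ, (∀ j, 0 ≤ c j) ∧ x = ∑ j, c j • v j := by
  constructor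
  · rintro ⟨n, c, w, h1, rfl⟩
    choose g hg using fun i => (h1 i).2
    refine ⟨fun j => ∑ i ∈ Finset.univ.filter (fun i => g i = j), c i,
      fun j => Finset.sum_nonneg fun i _ => (h1 i).1, ?_⟩
    have hw : ∀ i, c i • w i = c i • v (g i) := fun i => by rw [hg]
    simp only [hw]
    rw [← Finset.sum_fiberwise_of_maps_to (fun i _ => Finset.mem_univ (g i))
      (fun i => c i • v (g i))]
    refine Finset.sum_congr rfl fun j _ => ?_
    rw [Finset.sum_smul]
    refine Finset.sum_congr rfl fun i hi => ?_
    rw [(Finset.mem_filter.mp hi).2]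
  · rintro ⟨c, hc, rfl⟩
    exact ⟨k, c, v, fun j => ⟨hc j, Set.mem_range_self j⟩, rfl⟩

lemma clear_denom {d : ℕ} (M : AddSubmonoid (Fin d → ℤ)) (x : Fin d → ℚ)
    (hx : x ∈ conicHullQ (coeZQ '' (M : Set (Fin d → ℤ)))) :
    ∃ (N : ℕ) (m : Fin d → ℤ), 0 < N ∧ m ∈ M ∧ (N : ℚ) • x = coeZQ m := by
  obtain ⟨n, c, w, h1, rfl⟩ := hx
  choose u hu hw using fun i => (h1 i).2
  set N : ℕ := ∏ i, (c i).den with hN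
  have hNpos : 0 < N := Finset.prod_pos fun i _ => (c i).pos
  have key : ∀ i : Fin n, ∃ m : ℕ, (m : ℚ) = (N : ℚ) * c i := by
    intro i
    have hdvd : (c i).den ∣ N := Finset.dvd_prod_of_mem _ (Finset.mem_univ i)
    obtain ⟨e, he⟩ := hdvd
    refine ⟨e * (c i).num.toNat, ?_⟩
    have hnum : (0:ℤ) ≤ (c i).num := Rat.num_nonneg.mpr (h1 i).1
    have h2 : ((c i).num.toNat : ℤ) = (c i).num := Int.toNat_of_nonneg hnum
    have hden : ((c i).den : ℚ) * c i = (c i).num := by exact_mod_cast Rat.den_mul_eq_num (c i)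
    push_cast [he]
    rw [mul_comm ((c i).den : ℚ) (e:ℚ), mul_assoc, hden]
    congr 1
    exact_mod_cast h2
  choose nc hnc using key
  refine ⟨N, ∑ i, nc i • u i, hNpos, AddSubmonoid.sum_mem M fun i _ =>
    AddSubmonoid.nsmul_mem M (hu i) _, ?_⟩
  rw [coeZQ_sum, Finset.smul_sum]
  refine Finset.sum_congr rfl fun i _ => ?_
  rw [coeZQ_nsmul, hw, smul_smul, hnc]

lemma face_lemma {d : ℕ} (M : AddSubmonoid (Fin d → ℤ))
    (hred : ∀ x ∈ M, -x ∈ M → x = 0) (hatomic : AddIsAtomicIn M)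
    {k : ℕ} (v : Fin k → Fin d → ℚ) (hv : LinearIndependent ℚ v)
    (hcone : conicHullQ (coeZQ '' (M : Set (Fin d → ℤ))) = conicHullQ (Set.range v))
    {a : Fin d → ℤ} (ha : AddIsStrongAtomIn M a)
    {x y : Fin d → ℚ}
    (hx : x ∈ conicHullQ (coeZQ '' (M : Set (Fin d → ℤ))))
    (hy : y ∈ conicHullQ (coeZQ '' (M : Set (Fin d → ℤ))))
    {t : ℚ} (ht : 0 ≤ t) (hxy : x + y = t • coeZQ a) :
    ∃ s : ℚ, 0 ≤ s ∧ x = s • coeZQ a := by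
  have hfact : ∀ z ∈ M, ∃ s : Multiset (Fin d → ℤ),
      (∀ b ∈ s, AddIsAtomIn M b) ∧ s.sum = z := by
    intro z hz
    by_cases h0 : z = 0
    · exact ⟨0, by simp, by simp [h0]⟩
    · exact hatomic z hz fun hu => h0 (hred z hu.1 hu.2)
  rcases ht.eq_or_lt with h0 | htpos
  · -- t = 0 : the cone is pointed, so x = 0
    obtain ⟨c, hc, hxc⟩ := (mem_conicHull_range_iff v x).mp (by rw [← hcone]; exact hx)
    obtain ⟨c', hc', hyc⟩ := (mem_conicHull_range_iff v y).mp (by rw [← hcone]; exact hy)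
    have hxy0 : x + y = 0 := by rw [hxy, ← h0, zero_smul]
    have hsum0 : ∑ j, (c j + c' j) • v j = 0 := by
      calc ∑ j, (c j + c' j) • v j = ∑ j, (c j • v j + c' j • v j) := by
            refine Finset.sum_congr rfl fun j _ => add_smul _ _ _
        _ = x + y := by rw [Finset.sum_add_distrib, ← hxc, ← hyc]
        _ = 0 := hxy0
    have hz := linearIndependent_iff'.mp hv Finset.univ (fun j => c j + c' j) hsum0
    have hc0 : ∀ j, c j = 0 := by
      intro j
      have h1 : c j + c' j = 0 := by simpa using hz j (Finset.mem_univ j)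
      have := hc j
      have := hc' j
      linarith
    refine ⟨0, le_refl 0, ?_⟩
    rw [hxc, zero_smul]
    simp [hc0]
  · -- t > 0
    obtain ⟨N, mx, hN, hmx, hNx⟩ := clear_denom M x hx
    obtain ⟨N', my, hN', hmy, hNy⟩ := clear_denom M y hy
    set r : ℚ := (N : ℚ) * (N' : ℚ) * t with hr
    have hrpos : 0 < r := by positivity
    have hnum : 0 < r.num := Rat.num_pos.mpr hrpos
    set q : ℕ := r.den with hqdef
    set p : ℕ := r.num.toNat with hpdef
    have hq : 0 < q := r.pos
    have hp : 0 < p := by rw [hpdef]; omega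
    have hpcast : (p : ℚ) = (q : ℚ) * r := by
      have : ((q : ℚ)) * r = r.num := by exact_mod_cast Rat.den_mul_eq_num r
      rw [this, hpdef]
      exact_mod_cast congrArg Int.cast (Int.toNat_of_nonneg hnum.le)
    have hb1 : (q * N') • mx ∈ M := AddSubmonoid.nsmul_mem M hmx _
    have hb2 : (q * N) • my ∈ M := AddSubmonoid.nsmul_mem M hmy _
    have hcoe1 : coeZQ ((q * N') • mx) = (((q : ℚ) * N') * N) • x := by
      rw [coeZQ_nsmul, ← hNx, smul_smul]
      push_cast
      ring_nf
    have hcoe2 : coeZQ ((q * N) • my) = (((q : ℚ) * N) * N') • y := by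
      rw [coeZQ_nsmul, ← hNy, smul_smul]
      push_cast
      ring_nf
    have hkey : (q * N') • mx + (q * N) • my = p • a := by
      apply coeZQ_inj
      rw [coeZQ_add, hcoe1, hcoe2, coeZQ_nsmul]
      have : (((q : ℚ) * N') * N) • x + (((q : ℚ) * N) * N') • y
          = (((q : ℚ) * N') * N) • (x + y) := by
        rw [smul_add]; congr 2; ring
      rw [this, hxy, smul_smul, hpcast]
      congr 1
      rw [hr]; ring
    obtain ⟨s1, hs1a, hs1s⟩ := hfact _ hb1
    obtain ⟨s2, hs2a, hs2s⟩ := hfact _ hb2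
    have hrep := ha.2 p hp (s1 + s2)
      (by
        intro b hb
        rcases Multiset.mem_add.mp hb with h | h
        exacts [hs1a b h, hs2a b h])
      (by rw [Multiset.sum_add, hs1s, hs2s, hkey])
    have hall : ∀ b ∈ s1, b = a := fun b hb =>
      Multiset.eq_of_mem_replicate (by rw [← hrep]; exact Multiset.mem_add.mpr (Or.inl hb))
    have hs1sum : (q * N') • mx = (Multiset.card s1) • a := by
      rw [← hs1s, Multiset.eq_replicate_card.mpr hall, Multiset.sum_replicate, Multiset.card_replicate]
    have hD : (0:ℚ) < ((q : ℚ) * N') * N := by positivity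
    have hcast : (((q : ℚ) * N') * N) • x = ((Multiset.card s1 : ℕ) : ℚ) • coeZQ a := by
      rw [← hcoe1, hs1sum, coeZQ_nsmul]
    refine ⟨((Multiset.card s1 : ℕ) : ℚ) / (((q : ℚ) * N') * N), by positivity, ?_⟩
    calc x = (((q : ℚ) * N') * N)⁻¹ • ((((q : ℚ) * N') * N) • x) := by
          rw [smul_smul, inv_mul_cancel₀ hD.ne', one_smul]
      _ = (((q : ℚ) * N') * N)⁻¹ • (((Multiset.card s1 : ℕ) : ℚ) • coeZQ a) := by rw [hcast]
      _ = _ := by rw [smul_smul, div_eq_mul_inv, mul_comm]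

lemma strong_atom_ray {d : ℕ} (M : AddSubmonoid (Fin d → ℤ))
    (hred : ∀ x ∈ M, -x ∈ M → x = 0) (hatomic : AddIsAtomicIn M)
    {k : ℕ} (v : Fin k → Fin d → ℚ) (hv : LinearIndependent ℚ v)
    (hcone : conicHullQ (coeZQ '' (M : Set (Fin d → ℤ))) = conicHullQ (Set.range v))
    {a : Fin d → ℤ} (ha : AddIsStrongAtomIn M a) :
    ∃ (i : Fin k) (cc : ℚ), 0 < cc ∧ coeZQ a = cc • v i := by
  have haM : a ∈ M := ha.1.1
  have ha0 : a ≠ 0 := by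
    intro h
    exact ha.1.2.1 ⟨haM, by rw [h, neg_zero]; exact M.zero_mem⟩
  have hmem : coeZQ a ∈ conicHullQ (Set.range v) := by
    rw [← hcone]; exact subset_conicHullQ _ ⟨a, haM, rfl⟩
  obtain ⟨c, hc, hca⟩ := (mem_conicHull_range_iff v _).mp hmem
  have hcoe0 : coeZQ a ≠ 0 := by
    intro h
    exact ha0 (coeZQ_inj (h.trans (map_zero coeHomZQ).symm))
  have hex : ∃ i, 0 < c i := by
    by_contra h
    push_neg at h
    have hz : ∀ i, c i = 0 := fun i => le_antisymm (h i) (hc i)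
    exact hcoe0 (by rw [hca]; simp [hz])
  obtain ⟨i, hci⟩ := hex
  refine ⟨i, c i, hci, ?_⟩
  have hzero : ∀ j, j ≠ i → c j = 0 := by
    intro j hji
    by_contra hcj0
    have hcj : 0 < c j := (hc j).lt_of_ne (Ne.symm hcj0)
    have hxrep : c i • v i = ∑ l, (if l = i then c i else 0) • v l := by
      rw [Finset.sum_eq_single i (fun l _ hl => by rw [if_neg hl, zero_smul])
        (fun h => absurd (Finset.mem_univ i) h), if_pos rfl]
    have hyrep : (∑ l, (if l = i then 0 else c l) • v l : Fin d → ℚ)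
        ∈ conicHullQ (Set.range v) :=
      (mem_conicHull_range_iff v _).mpr ⟨fun l => if l = i then 0 else c l,
        fun l => by dsimp only; split <;> [exact le_refl 0; exact hc l], rfl⟩
    have hxmem : (c i • v i) ∈ conicHullQ (coeZQ '' (M : Set (Fin d → ℤ))) := by
      rw [hcone]
      exact (mem_conicHull_range_iff v _).mpr ⟨fun l => if l = i then c i else 0,
        fun l => by dsimp only; split <;> [exact hci.le; exact le_refl 0], hxrep⟩
    have hymem : (∑ l, (if l = i then 0 else c l) • v l : Fin d → ℚ)
        ∈ conicHullQ (coeZQ '' (M : Set (Fin d → ℤ))) := by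
      rw [hcone]; exact hyrep
    have hxy : c i • v i + (∑ l, (if l = i then 0 else c l) • v l : Fin d → ℚ)
        = (1 : ℚ) • coeZQ a := by
      rw [one_smul, hca, hxrep, ← Finset.sum_add_distrib]
      refine Finset.sum_congr rfl fun l _ => ?_
      rw [← add_smul]
      congr 1
      split <;> simp_all
    obtain ⟨s, hs0, hsx⟩ := face_lemma M hred hatomic v hv hcone ha hxmem hymem
      zero_le_one hxy
    have hslin : ∑ l, ((if l = i then c i else 0) - s * c l) • v l = 0 := by
      have h1 : ∑ l, (s * c l) • v l = s • coeZQ a := by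
        rw [hca, Finset.smul_sum]
        refine Finset.sum_congr rfl fun l _ => ?_
        rw [smul_smul]
      calc ∑ l, ((if l = i then c i else 0) - s * c l) • v l
          = ∑ l, ((if l = i then c i else 0) • v l - (s * c l) • v l) := by
            refine Finset.sum_congr rfl fun l _ => sub_smul _ _ _
        _ = (∑ l, (if l = i then c i else 0) • v l) - ∑ l, (s * c l) • v l := by
            rw [Finset.sum_sub_distrib]
        _ = c i • v i - s • coeZQ a := by rw [← hxrep, h1]
        _ = 0 := by rw [← hsx, sub_self]
    have hz := linearIndependent_iff'.mp hv Finset.univ _ hslin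
    have hsj : (if j = i then c i else 0) - s * c j = 0 := by
      simpa using hz j (Finset.mem_univ j)
    rw [if_neg hji] at hsj
    have hs00 : s = 0 := by
      rcases mul_eq_zero.mp (by linarith : s * c j = 0) with h | h
      · exact h
      · exact absurd h hcj0
    have hsi : (if i = i then c i else 0) - s * c i = 0 := by
      simpa using hz i (Finset.mem_univ i)
    rw [if_pos rfl, hs00, zero_mul, sub_zero] at hsi
    exact absurd hsi hci.ne'
  rw [hca, Finset.sum_eq_single i (fun j _ hji => by rw [hzero j hji, zero_smul])
    (fun h => absurd (Finset.mem_univ i) h)]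

/-- A reduced atomic submonoid of `ℤ^d` whose conic hull in `ℚ^d` is simplicial
(the conic hull of a linearly independent family) has at most `rank M` strong atoms,
where the rank of `M` is the dimension of the `ℚ`-span of `M` in `ℚ^d`
(i.e. of `ℚ ⊗ gp(M)`). -/
theorem strong_atoms_le_rank_of_simplicial {d : ℕ}
    (M : AddSubmonoid (Fin d → ℤ))
    (hred : ∀ x ∈ M, -x ∈ M → x = 0)
    (hatomic : AddIsAtomicIn M)
    (hsimp : ∃ (k : ℕ) (v : Fin k → Fin d → ℚ), LinearIndependent ℚ v ∧
      conicHullQ (coeZQ '' (M : Set (Fin d → ℤ))) = conicHullQ (Set.range v)) :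
    {a : Fin d → ℤ | AddIsStrongAtomIn M a}.Finite ∧
    {a : Fin d → ℤ | AddIsStrongAtomIn M a}.ncard ≤
      Module.finrank ℚ (Submodule.span ℚ (coeZQ '' (M : Set (Fin d → ℤ)))) := by
  obtain ⟨k, v, hv, hcone⟩ := hsimp
  set S := {a : Fin d → ℤ | AddIsStrongAtomIn M a} with hS
  have hchoice : ∀ a : S, ∃ (i : Fin k) (cc : ℚ), 0 < cc ∧ coeZQ a.1 = cc • v i :=
    fun a => strong_atom_ray M hred hatomic v hv hcone a.2
  choose f cf hcf hvcf using hchoice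
  have hinj : Function.Injective f := by
    intro a b hab
    set rr : ℚ := cf b / cf a with hrr
    have hrrpos : 0 < rr := div_pos (hcf b) (hcf a)
    have h1 : coeZQ b.1 = rr • coeZQ a.1 := by
      rw [hvcf b, hvcf a, hab, smul_smul, hrr, div_mul_cancel₀]
      exact (hcf a).ne'
    have hnum : 0 < rr.num := Rat.num_pos.mpr hrrpos
    have hp : 0 < rr.num.toNat := by omega
    have hpc : ((rr.num.toNat : ℕ) : ℚ) = (rr.den : ℚ) * rr := by
      have hd : ((rr.den : ℚ)) * rr = rr.num := by exact_mod_cast Rat.den_mul_eq_num rr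
      rw [hd]
      exact_mod_cast congrArg Int.cast (Int.toNat_of_nonneg hnum.le)
    have heq : rr.den • b.1 = rr.num.toNat • a.1 := by
      apply coeZQ_inj
      rw [coeZQ_nsmul, coeZQ_nsmul, h1, smul_smul, hpc]
    have hrep := a.2.2 rr.num.toNat hp (Multiset.replicate rr.den b.1)
      (fun x hx => by rw [Multiset.eq_of_mem_replicate hx]; exact b.2.1)
      (by rw [Multiset.sum_replicate, heq])
    have hbmem : b.1 ∈ Multiset.replicate rr.num.toNat a.1 := by
      rw [← hrep]
      exact Multiset.mem_replicate.mpr ⟨rr.pos.ne', rfl⟩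
    exact (Subtype.ext (Multiset.eq_of_mem_replicate hbmem)).symm
  have hfinS : Finite S := Finite.of_injective f hinj
  have hfin : S.Finite := Set.finite_coe_iff.mp hfinS
  refine ⟨hfin, ?_⟩
  have hcard : S.ncard ≤ k := by
    rw [← Nat.card_coe_set_eq]
    calc Nat.card S ≤ Nat.card (Fin k) := Nat.card_le_card_of_injective f hinj
      _ = k := by simp
  have hspan : Submodule.span ℚ (coeZQ '' (M : Set (Fin d → ℤ)))
      = Submodule.span ℚ (Set.range v) := by
    apply le_antisymm
    · rw [Submodule.span_le]
      intro z hz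
      exact conicHullQ_subset_span _ (by rw [← hcone]; exact subset_conicHullQ _ hz)
    · rw [Submodule.span_le]
      intro z hz
      exact conicHullQ_subset_span _ (by rw [hcone]; exact subset_conicHullQ _ hz)
  rw [hspan, finrank_span_eq_card hv, Fintype.card_fin]
  exact hcard
end

section
/- For each n ∈ ℕ₀ set aₙ = (n²−1, 2n, n²+1) ∈ ℤ³, and let M be the additive submonoid of ℤ³ generated by {aₙ : n ∈ ℕ₀}. Then M is atomic and every aₙ is a strong atom of M; in particular M is a rank-3 atomic monoid with infinitely many strong atoms. -/
section Aux

variable {a : ℕ → ℤ × ℤ × ℤ}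

lemma memClosure_iff (x : ℤ × ℤ × ℤ) :
    x ∈ AddSubmonoid.closure (Set.range a) ↔ ∃ s : Multiset ℕ, (s.map a).sum = x := by
  constructor
  · intro hx
    induction hx using AddSubmonoid.closure_induction with
    | mem y hy =>
      obtain ⟨n, rfl⟩ := hy
      exact ⟨{n}, by simp⟩
    | zero => exact ⟨0, by simp⟩
    | add y z _ _ hy hz =>
      obtain ⟨s, rfl⟩ := hy; obtain ⟨t, rfl⟩ := hz
      exact ⟨s + t, by simp⟩
  · rintro ⟨s, rfl⟩
    refine AddSubmonoid.multiset_sum_mem _ _ (fun y hy => ?_)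
    obtain ⟨n, _, rfl⟩ := Multiset.mem_map.mp hy
    exact AddSubmonoid.subset_closure ⟨n, rfl⟩

variable (ha : ∀ n : ℕ, a n = ((n : ℤ) ^ 2 - 1, 2 * (n : ℤ), (n : ℤ) ^ 2 + 1))
include ha

lemma sum_coords (s : Multiset ℕ) :
    ((s.map a).sum.1 = (s.map fun n : ℕ => (n:ℤ)^2).sum - s.card ∧
     (s.map a).sum.2.1 = 2 * (s.map fun n : ℕ => (n:ℤ)).sum ∧
     (s.map a).sum.2.2 = (s.map fun n : ℕ => (n:ℤ)^2).sum + s.card) := by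
  induction s using Multiset.induction with
  | empty => simp
  | cons n s ih =>
    obtain ⟨h1, h2, h3⟩ := ih
    simp only [Multiset.map_cons, Multiset.sum_cons, Prod.fst_add, Prod.snd_add,
      Multiset.card_cons, ha n, h1, h2, h3, Nat.cast_add, Nat.cast_one]
    refine ⟨by ring, by ring, by ring⟩

lemma card_le_sum (s : Multiset ℕ) : (s.card : ℤ) ≤ (s.map a).sum.2.2 := by
  have h := (sum_coords ha s).2.2
  have h0 : 0 ≤ (s.map fun n : ℕ => (n:ℤ)^2).sum :=
    Multiset.sum_nonneg (by
      intro x hx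
      obtain ⟨n, _, rfl⟩ := Multiset.mem_map.mp hx
      positivity)
  linarith

lemma sum_ne_zero {s : Multiset ℕ} (hs : s ≠ 0) : (s.map a).sum ≠ 0 := by
  intro h
  have h1 := card_le_sum ha s
  rw [h] at h1
  have h1' : (s.card:ℤ) ≤ 0 := by simpa using h1
  have hc : s.card = 0 := by exact_mod_cast le_antisymm h1' (by exact_mod_cast Nat.zero_le s.card)
  exact hs (Multiset.card_eq_zero.mp hc)

lemma unit_iff (x : ℤ × ℤ × ℤ) :
    AddIsUnitIn (AddSubmonoid.closure (Set.range a)) x ↔ x = 0 := by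
  constructor
  · rintro ⟨hx, hnx⟩
    obtain ⟨s, rfl⟩ := (memClosure_iff _).mp hx
    obtain ⟨t, ht⟩ := (memClosure_iff _).mp hnx
    by_contra h
    have hs : s ≠ 0 := by rintro rfl; simp at h
    have ht0 : t ≠ 0 := by
      rintro rfl
      simp only [Multiset.map_zero, Multiset.sum_zero] at ht
      exact sum_ne_zero ha hs (by rw [← neg_neg ((s.map a).sum), ← ht, neg_zero])
    have h1 : (1:ℤ) ≤ (s.map a).sum.2.2 := by
      have := card_le_sum ha s
      have hc : 1 ≤ s.card := Multiset.card_pos.mpr hs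
      have : (1:ℤ) ≤ (s.card : ℤ) := by exact_mod_cast hc
      linarith [card_le_sum ha s]
    have h2 : (1:ℤ) ≤ (t.map a).sum.2.2 := by
      have hc : 1 ≤ t.card := Multiset.card_pos.mpr ht0
      have : (1:ℤ) ≤ (t.card : ℤ) := by exact_mod_cast hc
      linarith [card_le_sum ha t]
    have : (t.map a).sum.2.2 = -((s.map a).sum.2.2) := by rw [ht]; rfl
    linarith
  · rintro rfl
    exact ⟨AddSubmonoid.zero_mem _, by simpa using AddSubmonoid.zero_mem _⟩

lemma diff_coords (s : Multiset ℕ) :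
    (s.map a).sum.2.2 - (s.map a).sum.1 = 2 * s.card := by
  obtain ⟨h1, _, h3⟩ := sum_coords ha s
  rw [h1, h3]; ring

lemma a_atom (n : ℕ) :
    AddIsAtomIn (AddSubmonoid.closure (Set.range a)) (a n) := by
  refine ⟨AddSubmonoid.subset_closure ⟨n, rfl⟩, ?_, ?_⟩
  · rw [unit_iff ha]
    intro h
    have : (a n).2.2 = 0 := by rw [h]; rfl
    rw [ha n] at this
    simp only at this
    nlinarith [sq_nonneg (n:ℤ)]
  · intro b c hb hc habc
    by_contra hcon
    push_neg at hcon
    obtain ⟨hub, huc⟩ := hcon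
    rw [unit_iff ha] at hub huc
    obtain ⟨s, rfl⟩ := (memClosure_iff _).mp hb
    obtain ⟨t, rfl⟩ := (memClosure_iff _).mp hc
    have hs : s ≠ 0 := by rintro rfl; simp at hub
    have ht : t ≠ 0 := by rintro rfl; simp at huc
    have h1 : (a n).2.2 - (a n).1 = 2 := by rw [ha n]; ring
    have h2 : a n = ((s + t).map a).sum := by rw [Multiset.map_add, Multiset.sum_add]; exact habc
    rw [h2, diff_coords ha] at h1
    have hcs : 1 ≤ s.card := Multiset.card_pos.mpr hs
    have hct : 1 ≤ t.card := Multiset.card_pos.mpr ht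
    have : (s + t).card = s.card + t.card := Multiset.card_add s t
    rw [this] at h1
    have : (2:ℤ) ≤ s.card + t.card := by exact_mod_cast Nat.add_le_add hcs hct
    push_cast at h1
    linarith

lemma atom_eq {b : ℤ × ℤ × ℤ}
    (hb : AddIsAtomIn (AddSubmonoid.closure (Set.range a)) b) : ∃ k, b = a k := by
  obtain ⟨hbm, hbu, hbs⟩ := hb
  obtain ⟨s, rfl⟩ := (memClosure_iff _).mp hbm
  rw [unit_iff ha] at hbu
  have hs : s ≠ 0 := by rintro rfl; simp at hbu
  obtain ⟨k, hk⟩ := Multiset.exists_mem_of_ne_zero hs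
  obtain ⟨t, rfl⟩ := Multiset.exists_cons_of_mem hk
  rcases eq_or_ne t 0 with rfl | ht
  · exact ⟨k, by simp⟩
  · exfalso
    have hsum : ((k ::ₘ t).map a).sum = a k + (t.map a).sum := by
      rw [Multiset.map_cons, Multiset.sum_cons]
    have h1 : a k ∈ AddSubmonoid.closure (Set.range a) := AddSubmonoid.subset_closure ⟨k, rfl⟩
    have h2 : (t.map a).sum ∈ AddSubmonoid.closure (Set.range a) :=
      (memClosure_iff _).mpr ⟨t, rfl⟩
    rcases hbs _ _ h1 h2 hsum with h | h
    · rw [unit_iff ha] at h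
      exact sum_ne_zero ha (Multiset.singleton_ne_zero k) (by simpa using h)
    · rw [unit_iff ha] at h
      exact sum_ne_zero ha ht h

lemma sq_expand (m : ℕ) (s : Multiset ℕ) :
    (s.map fun i : ℕ => ((i:ℤ) - m)^2).sum =
      (s.map fun i : ℕ => (i:ℤ)^2).sum - 2*(m:ℤ)*(s.map fun i : ℕ => (i:ℤ)).sum
        + (m:ℤ)^2 * s.card := by
  induction s using Multiset.induction with
  | empty => simp
  | cons n s ih =>
    simp only [Multiset.map_cons, Multiset.sum_cons, Multiset.card_cons, ih,
      Nat.cast_add, Nat.cast_one]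
    ring

lemma all_zero_of_sum_zero : ∀ t : Multiset ℤ, (∀ x ∈ t, 0 ≤ x) → t.sum = 0 → ∀ x ∈ t, x = 0 := by
  intro t
  induction t using Multiset.induction with
  | empty => simp
  | cons n s ih =>
    intro hpos hsum x hx
    have hn : 0 ≤ n := hpos n (Multiset.mem_cons_self n s)
    have hs : 0 ≤ s.sum := Multiset.sum_nonneg (fun y hy => hpos y (Multiset.mem_cons_of_mem hy))
    rw [Multiset.sum_cons] at hsum
    have hn0 : n = 0 := by linarith
    have hs0 : s.sum = 0 := by linarith
    rcases Multiset.mem_cons.mp hx with rfl | hx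
    · exact hn0
    · exact ih (fun y hy => hpos y (Multiset.mem_cons_of_mem hy)) hs0 x hx

lemma unique_factorization {s : Multiset ℕ} {n m : ℕ}
    (h : (s.map a).sum = n • a m) : s = Multiset.replicate n m := by
  have hco := sum_coords ha s
  obtain ⟨h1, h2, h3⟩ := hco
  have hsm : n • a m = ((n:ℤ) * ((m:ℤ)^2 - 1), (n:ℤ) * (2 * m), (n:ℤ) * ((m:ℤ)^2 + 1)) := by
    rw [ha m]
    ext <;> simp [Prod.smul_def] <;> push_cast <;> ring
  rw [hsm] at h
  have e1 : (s.map fun i : ℕ => (i:ℤ)^2).sum - s.card = (n:ℤ) * ((m:ℤ)^2 - 1) := by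
    rw [← h1, h]
  have e2 : 2 * (s.map fun i : ℕ => (i:ℤ)).sum = (n:ℤ) * (2 * m) := by
    rw [← h2, h]
  have e3 : (s.map fun i : ℕ => (i:ℤ)^2).sum + s.card = (n:ℤ) * ((m:ℤ)^2 + 1) := by
    rw [← h3, h]
  have hcard : (s.card : ℤ) = n := by linarith
  have hlin : (s.map fun i : ℕ => (i:ℤ)).sum = (n:ℤ) * m := by linarith
  have hsq : (s.map fun i : ℕ => (i:ℤ)^2).sum = (n:ℤ) * (m:ℤ)^2 := by linarith
  have hzero : (s.map fun i : ℕ => ((i:ℤ) - m)^2).sum = 0 := by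
    rw [sq_expand ha m s, hlin, hsq, hcard]; ring
  have hall : ∀ x ∈ (s.map fun i : ℕ => ((i:ℤ) - m)^2), x = 0 := by
    refine all_zero_of_sum_zero ha _ (fun x hx => ?_) hzero
    obtain ⟨i, _, rfl⟩ := Multiset.mem_map.mp hx
    positivity
  rw [Multiset.eq_replicate]
  constructor
  · exact_mod_cast hcard
  · intro i hi
    have := hall _ (Multiset.mem_map_of_mem _ hi)
    have h0 : (i:ℤ) - m = 0 := by
      exact pow_eq_zero_iff (by norm_num) |>.mp this
    have : (i:ℤ) = m := by linarith
    exact_mod_cast this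

lemma lift_multiset : ∀ s : Multiset (ℤ × ℤ × ℤ), (∀ b ∈ s, ∃ k, b = a k) →
    ∃ u : Multiset ℕ, u.map a = s := by
  intro s
  induction s using Multiset.induction with
  | empty => exact fun _ => ⟨0, rfl⟩
  | cons b s ih =>
    intro h
    obtain ⟨k, rfl⟩ := h b (Multiset.mem_cons_self b s)
    obtain ⟨u, rfl⟩ := ih (fun c hc => h c (Multiset.mem_cons_of_mem hc))
    exact ⟨k ::ₘ u, by rw [Multiset.map_cons]⟩

end Aux


/-- For `aₙ = (n²−1, 2n, n²+1) ∈ ℤ³`, the additive submonoid `M` generated by all `aₙ`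
is atomic and every `aₙ` is a strong atom of `M`; in particular `M` is an atomic monoid
of rank 3 with infinitely many strong atoms. -/
theorem infinitely_many_strong_atoms_example
    (a : ℕ → ℤ × ℤ × ℤ)
    (ha : ∀ n : ℕ, a n = ((n : ℤ) ^ 2 - 1, 2 * (n : ℤ), (n : ℤ) ^ 2 + 1))
    (M : AddSubmonoid (ℤ × ℤ × ℤ)) (hM : M = AddSubmonoid.closure (Set.range a)) :
    AddIsAtomicIn M ∧
    (∀ n : ℕ, AddIsStrongAtomIn M (a n)) ∧
    {x : ℤ × ℤ × ℤ | AddIsStrongAtomIn M x}.Infinite ∧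
    Module.finrank ℚ (Submodule.span ℚ
      ((fun p : ℤ × ℤ × ℤ => ((p.1 : ℚ), (p.2.1 : ℚ), (p.2.2 : ℚ))) '' (M : Set (ℤ × ℤ × ℤ)))) = 3 := by
  subst hM
  have hstrong : ∀ m : ℕ, AddIsStrongAtomIn (AddSubmonoid.closure (Set.range a)) (a m) := by
    intro m
    refine ⟨a_atom ha m, ?_⟩
    intro n hn s hs hsum
    obtain ⟨u, rfl⟩ := lift_multiset ha s (fun b hb => atom_eq ha (hs b hb))
    rw [unique_factorization ha hsum, Multiset.map_replicate]
  refine ⟨?_, hstrong, ?_, ?_⟩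
  · -- atomic
    intro x hx hux
    obtain ⟨s, rfl⟩ := (memClosure_iff _).mp hx
    refine ⟨s.map a, ?_, rfl⟩
    intro b hb
    obtain ⟨k, _, rfl⟩ := Multiset.mem_map.mp hb
    exact a_atom ha k
  · -- infinite
    have hinj : Function.Injective a := by
      intro n m h
      have := congrArg (fun p : ℤ × ℤ × ℤ => p.2.1) h
      rw [ha n, ha m] at this
      simp only at this
      exact_mod_cast (by linarith : (n:ℤ) = m)
    exact Set.infinite_of_injective_forall_mem hinj (fun n => hstrong n)
  · -- rank
    set f : ℤ × ℤ × ℤ → ℚ × ℚ × ℚ := fun p => ((p.1 : ℚ), (p.2.1 : ℚ), (p.2.2 : ℚ)) with hf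
    set S : Set (ℚ × ℚ × ℚ) := f '' (AddSubmonoid.closure (Set.range a) : Set (ℤ × ℤ × ℤ)) with hS
    have hmem : ∀ n : ℕ, f (a n) ∈ S :=
      fun n => ⟨a n, AddSubmonoid.subset_closure ⟨n, rfl⟩, rfl⟩
    have hv0 : ((-1:ℚ), (0:ℚ), (1:ℚ)) ∈ Submodule.span ℚ S := by
      have : _ ∈ Submodule.span ℚ S := Submodule.subset_span (hmem 0)
      rw [hf, ha 0] at this
      norm_num at this ⊢
      convert this using 2 <;> norm_num
    have hv1 : ((0:ℚ), (2:ℚ), (2:ℚ)) ∈ Submodule.span ℚ S := by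
      have : _ ∈ Submodule.span ℚ S := Submodule.subset_span (hmem 1)
      rw [hf, ha 1] at this
      norm_num at this ⊢
      convert this using 2 <;> norm_num
    have hv2 : ((3:ℚ), (4:ℚ), (5:ℚ)) ∈ Submodule.span ℚ S := by
      have : _ ∈ Submodule.span ℚ S := Submodule.subset_span (hmem 2)
      rw [hf, ha 2] at this
      norm_num at this ⊢
      convert this using 2 <;> norm_num
    have comb : ∀ c0 c1 c2 : ℚ,
        c0 • ((-1:ℚ), (0:ℚ), (1:ℚ)) + c1 • ((0:ℚ), (2:ℚ), (2:ℚ)) + c2 • ((3:ℚ), (4:ℚ), (5:ℚ))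
          ∈ Submodule.span ℚ S :=
      fun c0 c1 c2 => Submodule.add_mem _
        (Submodule.add_mem _ (Submodule.smul_mem _ c0 hv0) (Submodule.smul_mem _ c1 hv1))
        (Submodule.smul_mem _ c2 hv2)
    have he1 : ((1:ℚ), (0:ℚ), (0:ℚ)) ∈ Submodule.span ℚ S := by
      have := comb (-1/4) (-1/2) (1/4)
      convert this using 1
      rw [Prod.ext_iff, Prod.ext_iff]
      norm_num [Prod.smul_mk]
    have he2 : ((0:ℚ), (1:ℚ), (0:ℚ)) ∈ Submodule.span ℚ S := by
      have := comb (-3/4) 1 (-1/4)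
      convert this using 1
      rw [Prod.ext_iff, Prod.ext_iff]
      norm_num [Prod.smul_mk]
    have he3 : ((0:ℚ), (0:ℚ), (1:ℚ)) ∈ Submodule.span ℚ S := by
      have := comb (3/4) (-1/2) (1/4)
      convert this using 1
      rw [Prod.ext_iff, Prod.ext_iff]
      norm_num [Prod.smul_mk]
    have htop : Submodule.span ℚ S = ⊤ := by
      rw [eq_top_iff]
      rintro ⟨x, y, z⟩ -
      have := Submodule.add_mem _
        (Submodule.add_mem _ (Submodule.smul_mem _ x he1) (Submodule.smul_mem _ y he2))
        (Submodule.smul_mem _ z he3)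
      convert this using 1
      rw [Prod.ext_iff, Prod.ext_iff]
      norm_num [Prod.smul_mk]
    rw [htop, finrank_top]
    simp [Module.finrank_prod]
end
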